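/- If B is a minimum weight basis at λ, and at a nearby point λ' the only change in the ordering of element weights is that a pair (e,f) with w(e,λ) < w(f,λ) swaps to w(f,λ') < w(e,λ'), and all other strict pairwise comparisons are preserved, then either B or B − e + f (if independent) is a minimum weight basis at λ'. More precisely: if B is optimal for a weight function c : E → ℝ and c' : E → ℝ induces the same strict order on E except that e and f are transposed (with e,f adjacent in the order), then some basis B' with |B Δ B'| ≤ 2 and B' ⊆ (B ∪ {f}) is optimal for c'. -/

import Mathlib

open Set

lemma cost_exchange {α : Type*} [Fintype α] (c : α → ℝ) {S : Set α} {x y : α}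
    (hx : x ∈ S) (hy : y ∉ S) :
    ∑ᶠ a ∈ insert y (S \ {x}), c a = (∑ᶠ a ∈ S, c a) - c x + c y := by
  classical
  have h1 : (insert y (S \ {x}) : Set α) = ↑(insert y (S.toFinset.erase x)) := by
    simp [Set.ext_iff]
  rw [h1, finsum_mem_coe_finset]
  rw [show (∑ᶠ a ∈ S, c a) = ∑ a ∈ S.toFinset, c a by
    rw [← finsum_mem_coe_finset]; simp]
  rw [Finset.sum_insert (by simp [hy])]
  rw [Finset.sum_erase_eq_sub (by simpa using hx)]
  ring

lemma local_opt_global {α : Type*} [Fintype α] (M : Matroid α) (c : α → ℝ)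
    (hc : Function.Injective c) {B : Set α} (hB : M.IsBase B)
    (hloc : ∀ x ∈ B, ∀ y ∉ B, M.IsBase (insert y (B \ {x})) → c x ≤ c y) :
    ∀ B'', M.IsBase B'' → (∑ᶠ x ∈ B, c x) ≤ ∑ᶠ x ∈ B'', c x := by
  classical
  obtain ⟨Bs, hBs, hmin⟩ := Set.exists_min_image {B2 : Set α | M.IsBase B2}
    (fun B2 => ∑ᶠ x ∈ B2, c x) (Set.toFinite _) ⟨B, hB⟩
  simp only [Set.mem_setOf_eq] at hBs hmin
  suffices hBB : B = Bs by
    intro B'' hB''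
    rw [hBB]; exact hmin B'' hB''
  by_contra hne
  have hdne : (B \ Bs).Nonempty := by
    rcases Set.eq_empty_or_nonempty (B \ Bs) with h | h
    · exact absurd (hB.eq_of_subset_isBase hBs (Set.diff_eq_empty.mp h)) hne
    · exact h
  obtain ⟨e', he', hmax⟩ := Set.exists_max_image (B \ Bs) c ((B \ Bs).toFinite) hdne
  obtain ⟨f', hf', hBf'⟩ := hB.exchange hBs he'
  have h1 : c e' < c f' := by
    refine lt_of_le_of_ne (hloc e' he'.1 f' hf'.2 hBf') ?_
    intro h; exact hf'.2 (hc h ▸ he'.1)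
  obtain ⟨e'', he'', hBe''⟩ := hBs.exchange hB hf'
  have h2 : c f' ≤ c e'' := by
    have := hmin _ hBe''
    rw [cost_exchange c hf'.1 he''.2] at this
    linarith
  have h3 : c e'' ≤ c e' := hmax e'' ⟨he''.1, he''.2⟩
  linarith

/-- Pivot/swap lemma: if `B` is a minimum weight basis for the weight function `c`,
and `c'` induces the same strict order on the ground set except that the two
adjacent elements `e` and `f` (with `c e < c f`) are transposed, then some basis
`B'` with `|B ∆ B'| ≤ 2` and `B' ⊆ B ∪ {f}` is a minimum weight basis for `c'`. -/
theorem swap_optimal_basis {α : Type*} [Fintype α] (M : Matroid α)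
    (c c' : α → ℝ) (hc : Function.Injective c) (hc' : Function.Injective c')
    (e f : α) (hef : e ≠ f)
    (hlt : c e < c f) (hlt' : c' f < c' e)
    (hadj : ∀ g : α, ¬ (c e < c g ∧ c g < c f))
    (hsame : ∀ x y : α, ¬ (x = e ∧ y = f) → ¬ (x = f ∧ y = e) →
      (c x < c y ↔ c' x < c' y))
    (B : Set α) (hB : M.IsBase B)
    (hopt : ∀ B', M.IsBase B' → (∑ᶠ x ∈ B, c x) ≤ ∑ᶠ x ∈ B', c x) :
    ∃ B', M.IsBase B' ∧ (symmDiff B B').ncard ≤ 2 ∧ B' ⊆ B ∪ {f} ∧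
      ∀ B'', M.IsBase B'' → (∑ᶠ x ∈ B', c' x) ≤ ∑ᶠ x ∈ B'', c' x := by
  classical
  have locB : ∀ x ∈ B, ∀ y, y ∉ B → M.IsBase (insert y (B \ {x})) → c x < c y := by
    intro x hx y hy hbase
    have h := hopt _ hbase
    rw [cost_exchange c hx hy] at h
    have hle : c x ≤ c y := by linarith
    exact lt_of_le_of_ne hle fun hxy => hy (hc hxy ▸ hx)
  -- helper to bump c-comparisons across the adjacent pair
  have below : ∀ x, x ≠ e → c x < c f → c x < c e := by
    intro x hxe hxf
    have h := hadj x
    have hne : c x ≠ c e := fun h' => hxe (hc h')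
    rcases lt_or_gt_of_ne hne with h' | h'
    · exact h'
    · exact absurd ⟨h', hxf⟩ h
  have above : ∀ y, y ≠ f → c e < c y → c f < c y := by
    intro y hyf hey
    have h := hadj y
    have hne : c y ≠ c f := fun h' => hyf (hc h')
    rcases lt_or_gt_of_ne hne with h' | h'
    · exact absurd ⟨hey, h'⟩ h
    · exact h'
  by_cases hcase : e ∈ B ∧ f ∉ B ∧ M.IsBase (insert f (B \ {e}))
  · -- swap case: B' = insert f (B \ {e})
    obtain ⟨heB, hfB, hB'⟩ := hcase
    set B' : Set α := insert f (B \ {e}) with hB'def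
    have heB' : e ∉ B' := by
      rintro (h | h)
      · exact hef h
      · exact h.2 rfl
    have hfB' : f ∈ B' := Set.mem_insert _ _
    refine ⟨B', hB', ?_, ?_, ?_⟩
    · have hsd : symmDiff B B' = {e, f} := by
        ext a
        simp only [Set.symmDiff_def, Set.mem_union, Set.mem_diff, hB'def,
          Set.mem_insert_iff, Set.mem_singleton_iff]
        constructor
        · rintro (⟨haB, ha⟩ | ⟨(rfl | ⟨haB, hae⟩), haB'⟩)
          · push_neg at ha
            exact Or.inl (ha.2 haB)
          · exact Or.inr rfl
          · exact absurd haB haB'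
        · rintro (rfl | rfl)
          · exact Or.inl ⟨heB, by simp [hef, hef.symm]⟩
          · exact Or.inr ⟨Or.inl rfl, hfB⟩
      rw [hsd, Set.ncard_pair hef]
    · intro a ha
      rcases ha with rfl | ⟨haB, _⟩
      · exact Or.inr rfl
      · exact Or.inl haB
    · refine local_opt_global M c' hc' hB' ?_
      intro x hx y hy hD
      by_cases hxf : x = f
      · obtain rfl : f = x := hxf.symm
        by_cases hye : y = e
        · obtain rfl : e = y := hye.symm; exact hlt'.le
        · have hyB : y ∉ B := fun h => hy (Or.inr ⟨h, hye⟩)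
          have hyf : y ≠ f := fun h => hy (h ▸ hfB')
          have hD' : M.IsBase (insert y (B \ {e})) := by
            have : B' \ {f} = B \ {e} := by
              ext a
              simp only [hB'def, Set.mem_diff, Set.mem_insert_iff,
                Set.mem_singleton_iff]
              constructor
              · rintro ⟨rfl | ⟨haB, hae⟩, haf⟩
                · exact absurd rfl haf
                · exact ⟨haB, hae⟩
              · rintro ⟨haB, hae⟩
                exact ⟨Or.inr ⟨haB, hae⟩, fun h => hfB (h ▸ haB)⟩
            rwa [this] at hD
          have h1 : c e < c y := locB e heB y hyB hD'
          have h2 : c f < c y := above y hyf h1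
          exact ((hsame f y (fun h => hef h.1.symm) (fun h => hye h.2)).mp h2).le
      · have hxB' : x ∈ B \ {e} := by
          rcases hx with rfl | h
          · exact absurd rfl hxf
          · exact h
        by_cases hye : y = e
        · obtain rfl : e = y := hye.symm
          have hDeq : insert e (B' \ {x}) = insert f (B \ {x}) := by
            ext a
            simp only [hB'def, Set.mem_insert_iff, Set.mem_diff,
              Set.mem_singleton_iff]
            constructor
            · rintro (rfl | ⟨rfl | ⟨haB, hae⟩, hax⟩)
              · exact Or.inr ⟨heB, fun h => hxB'.2 h.symm⟩
              · exact Or.inl rfl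
              · exact Or.inr ⟨haB, hax⟩
            · rintro (rfl | ⟨haB, hax⟩)
              · exact Or.inr ⟨Or.inl rfl, fun h => hxf h.symm⟩
              · by_cases hae : a = e
                · exact Or.inl hae
                · exact Or.inr ⟨Or.inr ⟨haB, hae⟩, hax⟩
          rw [hDeq] at hD
          have h1 : c x < c f := locB x hxB'.1 f hfB hD
          have h2 : c x < c e := below x hxB'.2 h1
          exact ((hsame x e (fun h => hef h.2) (fun h => hxf h.1)).mp h2).le
        · -- x ≠ f, y ≠ e : the two-exchange argument
          have hyB : y ∉ B := fun h => hy (Or.inr ⟨h, hye⟩)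
          have hyf : y ≠ f := fun h => hy (h ▸ hfB')
          have hxB : x ∈ B := hxB'.1
          have hxy : x ≠ y := fun h => hyB (h ▸ hxB)
          have hgoal : c x < c y := by
            have hxD : x ∉ insert y (B' \ {x}) := by
              simp [hxy]
            obtain ⟨g, hg, hgB⟩ := hB.exchange hD ⟨hxB, hxD⟩
            have hgfy : g = f ∨ g = y := by
              rcases hg with ⟨hgD, hgnB⟩
              rcases hgD with rfl | ⟨hgB', _⟩
              · exact Or.inr rfl
              · rcases hgB' with rfl | ⟨h, _⟩
                · exact Or.inl rfl
                · exact absurd h hgnB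
            rcases hgfy with hgf | hgy
            · -- g = f : get c x < c e, then second exchange
              rw [hgf] at hgB
              have h1 : c x < c f := locB x hxB f hfB hgB
              have h2 : c x < c e := below x hxB'.2 h1
              have hfD : f ∈ insert y (B' \ {x}) := Or.inr ⟨hfB', fun h => hxf h.symm⟩
              obtain ⟨h, hh, hhB⟩ := hD.exchange hB ⟨hfD, hfB⟩
              have hhex : h = e ∨ h = x := by
                rcases hh with ⟨hhB2, hhD⟩
                by_cases hhe : h = e
                · exact Or.inl hhe
                · by_cases hhx : h = x
                  · exact Or.inr hhx
                  · exact absurd (Or.inr ⟨Or.inr ⟨hhB2, hhe⟩, hhx⟩ :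
                      h ∈ insert y (B' \ {x})) hhD
              have hDf : (insert y (B' \ {x})) \ {f} = insert y ((B \ {e}) \ {x}) := by
                ext a
                simp only [hB'def, Set.mem_diff, Set.mem_insert_iff,
                  Set.mem_singleton_iff]
                constructor
                · rintro ⟨rfl | ⟨rfl | ⟨haB, hae⟩, hax⟩, haf⟩
                  · exact Or.inl rfl
                  · exact absurd rfl haf
                  · exact Or.inr ⟨⟨haB, hae⟩, hax⟩
                · rintro (rfl | ⟨⟨haB, hae⟩, hax⟩)
                  · exact ⟨Or.inl rfl, hyf⟩
                  · exact ⟨Or.inr ⟨Or.inr ⟨haB, hae⟩, hax⟩,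
                      fun h' => hfB (h' ▸ haB)⟩
              rcases hhex with hhe | hhx
              · -- h = e : insert e ...
                rw [hhe] at hhB
                have hEq : insert e ((insert y (B' \ {x})) \ {f})
                    = insert y (B \ {x}) := by
                  rw [hDf]
                  ext a
                  simp only [Set.mem_insert_iff, Set.mem_diff,
                    Set.mem_singleton_iff]
                  constructor
                  · rintro (rfl | rfl | ⟨⟨haB, hae⟩, hax⟩)
                    · exact Or.inr ⟨heB, fun h' => hxB'.2 h'.symm⟩
                    · exact Or.inl rfl
                    · exact Or.inr ⟨haB, hax⟩
                  · rintro (rfl | ⟨haB, hax⟩)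
                    · exact Or.inr (Or.inl rfl)
                    · by_cases hae : a = e
                      · exact Or.inl hae
                      · exact Or.inr (Or.inr ⟨⟨haB, hae⟩, hax⟩)
                rw [hEq] at hhB
                exact locB x hxB y hyB hhB
              · -- h = x : insert x ... = insert y (B \ {e})
                rw [hhx] at hhB
                have hEq : insert x ((insert y (B' \ {x})) \ {f})
                    = insert y (B \ {e}) := by
                  rw [hDf]
                  ext a
                  simp only [Set.mem_insert_iff, Set.mem_diff,
                    Set.mem_singleton_iff]
                  constructor
                  · rintro (rfl | rfl | ⟨⟨haB, hae⟩, hax⟩)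
                    · exact Or.inr ⟨hxB, hxB'.2⟩
                    · exact Or.inl rfl
                    · exact Or.inr ⟨haB, hae⟩
                  · rintro (rfl | ⟨haB, hae⟩)
                    · exact Or.inr (Or.inl rfl)
                    · by_cases hax : a = x
                      · exact Or.inl hax
                      · exact Or.inr (Or.inr ⟨⟨haB, hae⟩, hax⟩)
                rw [hEq] at hhB
                have h3 : c e < c y := locB e heB y hyB hhB
                linarith
            · -- g = y : direct
              rw [hgy] at hgB
              exact locB x hxB y hyB hgB
          exact ((hsame x y (fun h => hxB'.2 h.1) (fun h => hxf h.1)).mp hgoal).le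
  · -- no swap: B' = B
    refine ⟨B, hB, ?_, Set.subset_union_left, ?_⟩
    · simp [symmDiff_self]
    · refine local_opt_global M c' hc' hB ?_
      intro x hx y hy hD
      have h1 : c x < c y := locB x hx y hy hD
      by_cases hxe : x = e
      · by_cases hyf : y = f
        · exact absurd ⟨hxe ▸ hx, hyf ▸ hy, by rw [← hxe, ← hyf]; exact hD⟩ hcase
        · refine ((hsame x y (fun h => hyf h.2) ?_).mp h1).le
          rintro ⟨hxf, -⟩
          exact hef (hxe ▸ hxf)
      · have hxf2 : ¬ (x = f ∧ y = e) := by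
          rintro ⟨rfl, rfl⟩
          exact absurd h1 (not_lt.mpr hlt.le)
        exact ((hsame x y (fun h => hxe h.1) hxf2).mp h1).le
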